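/- Let σ be the class in PGL₂(ℚ) of the matrix with rows (1,1),(0,1) and τ the class of the matrix with rows (3,0),(0,1). Let B be the subgroup of PGL₂(ℚ) consisting of all classes of matrices of the form with rows (1,c),(0,1) for c ∈ ℚ (the parabolic transformations z ↦ z + c). If H is any subgroup of PGL₂(ℚ) containing both σ and τ, then the subgroup H ∩ B is not finitely generated as a group. -/

import Mathlib

open Matrix

noncomputable section

/-- The projective line `ℙ¹(K)` over a field `K`, as the projectivization of `K²`. -/
abbrev P1 (K : Type*) [Field K] : Type _ := Projectivization K (Fin 2 → K)

/-- `PGL₂(K)`: the quotient of `GL₂(K)` by its center. -/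
abbrev PGL2 (K : Type*) [Field K] : Type _ :=
  GL (Fin 2) K ⧸ Subgroup.center (GL (Fin 2) K)

namespace PGL2

variable {K : Type*} [Field K]

/-- The linear automorphism of `K²` attached to an element of `GL₂(K)`. -/
def glEquiv (g : GL (Fin 2) K) : (Fin 2 → K) ≃ₗ[K] (Fin 2 → K) :=
  (Matrix.GeneralLinearGroup.toLin g).toLinearEquiv

lemma glEquiv_apply (g : GL (Fin 2) K) (v : Fin 2 → K) :
    glEquiv g v = (g : Matrix (Fin 2) (Fin 2) K).mulVec v := rfl

/-- `GL₂(K)` acts on `ℙ¹(K)` by Möbius transformations. -/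
instance : SMul (GL (Fin 2) K) (P1 K) :=
  ⟨fun g => Projectivization.map (glEquiv g).toLinearMap (glEquiv g).injective⟩

lemma gl_smul_mk (g : GL (Fin 2) K) (v : Fin 2 → K) (hv : v ≠ 0) :
    g • Projectivization.mk K v hv
      = Projectivization.mk K ((g : Matrix (Fin 2) (Fin 2) K).mulVec v)
          (fun h => hv ((glEquiv g).injective (by rw [map_zero]; exact h))) :=
  Projectivization.map_mk (glEquiv g).toLinearMap (glEquiv g).injective v hv

instance : MulAction (GL (Fin 2) K) (P1 K) where
  one_smul x := by
    induction x using Projectivization.ind with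
    | h v hv => rw [gl_smul_mk]; simp
  mul_smul g h x := by
    induction x using Projectivization.ind with
    | h v hv => rw [gl_smul_mk, gl_smul_mk, gl_smul_mk]; simp only [Units.val_mul, Matrix.mulVec_mulVec]

lemma exists_scalar_of_mem_center (g : GL (Fin 2) K)
    (hg : g ∈ Subgroup.center (GL (Fin 2) K)) :
    ∃ a : K, (g : Matrix (Fin 2) (Fin 2) K) = a • (1 : Matrix (Fin 2) (Fin 2) K) := by
  have hmem := Subgroup.mem_center_iff.mp hg
  set A : Matrix (Fin 2) (Fin 2) K := (g : Matrix (Fin 2) (Fin 2) K) with hA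
  have hUdet : ((!![1, 1; 0, 1] : Matrix (Fin 2) (Fin 2) K)).det ≠ 0 := by
    norm_num [Matrix.det_fin_two_of]
  have hLdet : ((!![1, 0; 1, 1] : Matrix (Fin 2) (Fin 2) K)).det ≠ 0 := by
    norm_num [Matrix.det_fin_two_of]
  have hU := congrArg Units.val (hmem (Matrix.GeneralLinearGroup.mkOfDetNeZero _ hUdet))
  have hL := congrArg Units.val (hmem (Matrix.GeneralLinearGroup.mkOfDetNeZero _ hLdet))
  have hU' : (!![1, 1; 0, 1] : Matrix (Fin 2) (Fin 2) K) * A = A * !![1, 1; 0, 1] := hU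
  have hL' : (!![1, 0; 1, 1] : Matrix (Fin 2) (Fin 2) K) * A = A * !![1, 0; 1, 1] := hL
  have e1 := congrFun (congrFun hU' 0) 0
  have e2 := congrFun (congrFun hU' 0) 1
  have e3 := congrFun (congrFun hL' 0) 0
  simp [Matrix.mul_apply, Fin.sum_univ_two] at e1 e2 e3
  refine ⟨A 0 0, ?_⟩
  ext i j
  fin_cases i <;> fin_cases j <;>
    simp [Matrix.one_apply] <;> first | exact e3 | exact e1 | linear_combination e2



lemma center_smul_eq (g : GL (Fin 2) K) (hg : g ∈ Subgroup.center (GL (Fin 2) K))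
    (x : P1 K) : g • x = x := by
  obtain ⟨a, hA⟩ := exists_scalar_of_mem_center g hg
  have ha : a ≠ 0 := by
    intro h
    subst h
    have : IsUnit (g : Matrix (Fin 2) (Fin 2) K).det := ⟨Matrix.GeneralLinearGroup.det g, rfl⟩
    rw [hA] at this
    simp at this
  induction x using Projectivization.ind with
  | h v hv =>
    rw [gl_smul_mk]
    rw [Projectivization.mk_eq_mk_iff]
    exact ⟨Units.mk0 a ha, by simp [hA]; ext i; fin_cases i <;> simp⟩

/-- `PGL₂(K)` acts on `ℙ¹(K)` by Möbius transformations. -/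
def toPerm : PGL2 K →* Equiv.Perm (P1 K) :=
  QuotientGroup.lift _ (MulAction.toPermHom (GL (Fin 2) K) (P1 K))
    (fun g hg => Equiv.ext fun x => center_smul_eq g hg x)

instance : SMul (PGL2 K) (P1 K) := ⟨fun g x => toPerm g x⟩

lemma smul_def (g : PGL2 K) (x : P1 K) : g • x = toPerm g x := rfl

instance : MulAction (PGL2 K) (P1 K) where
  one_smul x := by simp [smul_def]
  mul_smul g h x := by simp [smul_def]

/-- The class in `PGL₂(K)` of a matrix with nonzero determinant. -/
def cls (M : Matrix (Fin 2) (Fin 2) K) (h : M.det ≠ 0) : PGL2 K :=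
  QuotientGroup.mk (Matrix.GeneralLinearGroup.mkOfDetNeZero M h)

lemma cls_smul_mk (M : Matrix (Fin 2) (Fin 2) K) (h : M.det ≠ 0) (v : Fin 2 → K)
    (hv : v ≠ 0) (hMv : M.mulVec v ≠ 0) :
    cls M h • Projectivization.mk K v hv = Projectivization.mk K (M.mulVec v) hMv := by
  rw [smul_def, cls]
  show (Matrix.GeneralLinearGroup.mkOfDetNeZero M h) • Projectivization.mk K v hv = _
  rw [gl_smul_mk]
  rfl

lemma vec_ne_zero (a : K) : ![a, (1 : K)] ≠ 0 := fun h => by simpa using congrFun h 1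

/-- The affine point `[z : 1]` of `ℙ¹(K)`. -/
def affPt (z : K) : P1 K := Projectivization.mk K ![z, 1] (vec_ne_zero z)

/-- The point `[a : b]` of `ℙ¹(K)`. -/
def pt (a b : K) (h : ![a, b] ≠ 0) : P1 K := Projectivization.mk K ![a, b] h

end PGL2


open PGL2

/-- The parabolic transformation `z ↦ z + c` as an element of `PGL₂(ℚ)`. -/
noncomputable def uni (c : ℚ) : PGL2 ℚ :=
  cls !![(1 : ℚ), c; 0, 1] (by norm_num [Matrix.det_fin_two_of])

lemma cls_mul {M N : Matrix (Fin 2) (Fin 2) ℚ} (hM : M.det ≠ 0) (hN : N.det ≠ 0)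
    (hMN : (M * N).det ≠ 0) : cls M hM * cls N hN = cls (M * N) hMN := by
  rw [cls, cls, cls, ← QuotientGroup.mk_mul]
  congr 1
  exact Units.ext rfl

lemma cls_congr {M N : Matrix (Fin 2) (Fin 2) ℚ} (h : M = N) (hM : M.det ≠ 0)
    (hN : N.det ≠ 0) : cls M hM = cls N hN := by subst h; rfl

lemma uni_mul (c d : ℚ) : uni c * uni d = uni (c + d) := by
  rw [uni, uni, uni, cls_mul _ _ (by norm_num [Matrix.det_fin_two_of, Matrix.mul_fin_two])]
  exact cls_congr (by rw [Matrix.mul_fin_two]; norm_num [add_comm]) _ _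

lemma uni_zero : uni 0 = 1 := by
  have h1 : (!![(1 : ℚ), 0; 0, 1]) = (1 : Matrix (Fin 2) (Fin 2) ℚ) := by
    ext i j
    fin_cases i <;> fin_cases j <;> simp [Matrix.one_apply]
  rw [uni, cls_congr h1 _ (by norm_num), cls]
  have : Matrix.GeneralLinearGroup.mkOfDetNeZero (1 : Matrix (Fin 2) (Fin 2) ℚ)
      (by norm_num) = 1 := Units.ext rfl
  rw [this]
  rfl

/-- `B ⊂ PGL₂(ℚ)`: the subgroup of all classes of unipotent upper triangular matrices,
i.e. of the parabolic transformations `z ↦ z + c`. -/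
noncomputable def B : Subgroup (PGL2 ℚ) where
  carrier := {x : PGL2 ℚ | ∃ c : ℚ, x = uni c}
  one_mem' := ⟨0, uni_zero.symm⟩
  mul_mem' := by
    rintro x y ⟨c, rfl⟩ ⟨d, rfl⟩
    exact ⟨c + d, uni_mul c d⟩
  inv_mem' := by
    rintro x ⟨c, rfl⟩
    exact ⟨-c, inv_eq_of_mul_eq_one_right (by rw [uni_mul]; simp [uni_zero])⟩

lemma scalar_det_ne (a : ℚ) (ha : a ≠ 0) :
    (a • (1 : Matrix (Fin 2) (Fin 2) ℚ)).det ≠ 0 := by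
  rw [Matrix.det_smul, Matrix.det_one, mul_one]
  exact pow_ne_zero _ ha

lemma scalar_unit_central (a : ℚ) (ha : a ≠ 0) :
    Matrix.GeneralLinearGroup.mkOfDetNeZero (a • (1 : Matrix (Fin 2) (Fin 2) ℚ))
      (scalar_det_ne a ha) ∈ Subgroup.center (GL (Fin 2) ℚ) := by
  rw [Subgroup.mem_center_iff]
  intro g
  apply Units.ext
  show (g : Matrix (Fin 2) (Fin 2) ℚ) * (a • 1) = (a • 1) * (g : Matrix (Fin 2) (Fin 2) ℚ)
  simp [Matrix.mul_smul, Matrix.smul_mul]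

lemma cls_smul (a : ℚ) (ha : a ≠ 0) (M : Matrix (Fin 2) (Fin 2) ℚ) (hM : M.det ≠ 0)
    (hM' : (a • M).det ≠ 0) : cls (a • M) hM' = cls M hM := by
  have key : Matrix.GeneralLinearGroup.mkOfDetNeZero (a • M) hM' =
      Matrix.GeneralLinearGroup.mkOfDetNeZero (a • (1 : Matrix (Fin 2) (Fin 2) ℚ))
        (scalar_det_ne a ha) * Matrix.GeneralLinearGroup.mkOfDetNeZero M hM := by
    apply Units.ext
    show a • M = (a • 1) * M
    simp [Matrix.smul_mul]
  rw [cls, cls, key, QuotientGroup.mk_mul,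
    (QuotientGroup.eq_one_iff _).mpr (scalar_unit_central a ha), one_mul]

lemma uni_eq_one {c : ℚ} (h : uni c = 1) : c = 0 := by
  have hc : Matrix.GeneralLinearGroup.mkOfDetNeZero !![(1 : ℚ), c; 0, 1]
      (by norm_num [Matrix.det_fin_two_of]) ∈ Subgroup.center (GL (Fin 2) ℚ) :=
    (QuotientGroup.eq_one_iff _).mp h
  obtain ⟨a, hA⟩ := exists_scalar_of_mem_center _ hc
  have h01 := congrFun (congrFun hA 0) 1
  simpa [Matrix.one_apply] using h01

lemma uni_injective {c d : ℚ} (h : uni c = uni d) : c = d := by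
  have : uni c * uni (-d) = uni d * uni (-d) := by rw [h]
  rw [uni_mul, uni_mul] at this
  simp only [add_neg_cancel, uni_zero] at this
  have := uni_eq_one this
  linarith

lemma cls_one : cls (1 : Matrix (Fin 2) (Fin 2) ℚ) (by norm_num) = 1 := by
  rw [cls]
  have : Matrix.GeneralLinearGroup.mkOfDetNeZero (1 : Matrix (Fin 2) (Fin 2) ℚ)
      (by norm_num) = 1 := Units.ext rfl
  rw [this]; rfl

lemma tauL_mul_tau :
    cls !![(1 : ℚ), 0; 0, 3] (by norm_num [Matrix.det_fin_two_of]) *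
      cls !![(3 : ℚ), 0; 0, 1] (by norm_num [Matrix.det_fin_two_of]) = 1 := by
  rw [cls_mul _ _ (by norm_num [Matrix.det_fin_two_of, Matrix.mul_fin_two])]
  have h3 : (!![(1 : ℚ), 0; 0, 3] * !![(3 : ℚ), 0; 0, 1]) =
      (3 : ℚ) • (1 : Matrix (Fin 2) (Fin 2) ℚ) := by
    rw [Matrix.mul_fin_two]
    ext i j
    fin_cases i <;> fin_cases j <;> simp [Matrix.one_apply]
  rw [cls_congr h3 _ (scalar_det_ne 3 (by norm_num)),
    cls_smul 3 (by norm_num) 1 (by simp), cls_one]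

lemma conj_uni (c : ℚ) :
    cls !![(1 : ℚ), 0; 0, 3] (by norm_num [Matrix.det_fin_two_of]) * uni c *
      cls !![(3 : ℚ), 0; 0, 1] (by norm_num [Matrix.det_fin_two_of]) = uni (c / 3) := by
  rw [uni, cls_mul _ _ (by norm_num [Matrix.det_fin_two_of, Matrix.mul_fin_two]),
    cls_mul _ _ (by norm_num [Matrix.det_fin_two_of, Matrix.mul_fin_two])]
  have h3 : (!![(1 : ℚ), 0; 0, 3] * !![(1 : ℚ), c; 0, 1] * !![(3 : ℚ), 0; 0, 1]) =
      (3 : ℚ) • !![(1 : ℚ), c / 3; 0, 1] := by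
    rw [Matrix.mul_fin_two, Matrix.mul_fin_two]
    ext i j
    fin_cases i <;> fin_cases j <;> simp <;> ring
  rw [cls_congr h3 _ (by norm_num [Matrix.det_fin_two_of]),
    cls_smul 3 (by norm_num) _ (by norm_num [Matrix.det_fin_two_of])]
  rfl

/-- If a subgroup `H` of `PGL₂(ℚ)` contains `σ : z ↦ z + 1` and `τ : z ↦ 3z`, then
`H ∩ B` is not finitely generated. -/
theorem inf_parabolic_not_fg (H : Subgroup (PGL2 ℚ))
    (hσ : cls !![(1 : ℚ), 1; 0, 1] (by norm_num [Matrix.det_fin_two_of]) ∈ H)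
    (hτ : cls !![(3 : ℚ), 0; 0, 1] (by norm_num [Matrix.det_fin_two_of]) ∈ H) :
    ¬ (H ⊓ B).FG := by
  classical
  -- τ⁻¹ = class of !![1,0;0,3] is in H
  have hτL : cls !![(1 : ℚ), 0; 0, 3] (by norm_num [Matrix.det_fin_two_of]) ∈ H := by
    have : cls !![(1 : ℚ), 0; 0, 3] (by norm_num [Matrix.det_fin_two_of]) =
        (cls !![(3 : ℚ), 0; 0, 1] (by norm_num [Matrix.det_fin_two_of]))⁻¹ :=
      eq_inv_of_mul_eq_one_left tauL_mul_tau
    rw [this]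
    exact inv_mem hτ
  -- all the uni (1/3^n) lie in H
  have key : ∀ n : ℕ, uni (1 / 3 ^ n) ∈ H := by
    intro n
    induction n with
    | zero => simpa [uni] using hσ
    | succ n ih =>
      have h3 : (1 : ℚ) / 3 ^ (n + 1) = (1 / 3 ^ n) / 3 := by
        rw [pow_succ]; ring
      rw [h3, ← conj_uni]
      exact mul_mem (mul_mem hτL ih) hτ
  rintro ⟨T, hT⟩
  -- for each generator pick its parabolic parameter
  set par : PGL2 ℚ → ℚ := fun g => if h : ∃ c : ℚ, g = uni c then h.choose else 0 with hpar
  have par_spec : ∀ g : PGL2 ℚ, (∃ c : ℚ, g = uni c) → g = uni (par g) := by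
    intro g h
    rw [hpar]
    simp only [h, dif_pos]
    exact h.choose_spec
  set N : ℕ := ∏ t ∈ T, (par t).den with hN
  have hNpos : 0 < N := Finset.prod_pos fun t _ => (par t).pos
  -- every element of the closure is uni (m / N) for some integer m
  have main : ∀ g ∈ Subgroup.closure (T : Set (PGL2 ℚ)), ∃ m : ℤ, g = uni (m / N) := by
    intro g hg
    induction hg using Subgroup.closure_induction with
    | mem t ht =>
      have htB : t ∈ B := by
        have : t ∈ H ⊓ B := hT ▸ Subgroup.subset_closure ht
        exact this.2
      obtain ⟨c, hc⟩ := htB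
      have hspec := par_spec t ⟨c, hc⟩
      have hdvd : (par t).den ∣ N := Finset.dvd_prod_of_mem _ ht
      obtain ⟨k, hk⟩ := hdvd
      refine ⟨(par t).num * k, ?_⟩
      have hkpos : 0 < k := by
        rcases Nat.eq_zero_or_pos k with h0 | h0
        · exfalso; rw [h0, mul_zero] at hk; omega
        · exact h0
      have hden : ((par t).den : ℚ) ≠ 0 := by exact_mod_cast (par t).den_nz
      have hkQ : (k : ℚ) ≠ 0 := by exact_mod_cast hkpos.ne'
      refine hspec.trans (congrArg uni ?_)
      have hNk : ((N : ℕ) : ℚ) = ((par t).den : ℚ) * k := by exact_mod_cast hk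
      rw [hNk]
      push_cast
      rw [mul_div_mul_right _ _ hkQ, Rat.num_div_den]
    | one => exact ⟨0, by simp [uni_zero]⟩
    | mul x y hx hy ihx ihy =>
      obtain ⟨m, rfl⟩ := ihx
      obtain ⟨m', rfl⟩ := ihy
      exact ⟨m + m', by rw [uni_mul]; congr 1; push_cast; ring⟩
    | inv x hx ihx =>
      obtain ⟨m, rfl⟩ := ihx
      refine ⟨-m, ?_⟩
      have : uni ((m : ℚ) / N) * uni ((-m : ℤ) / N) = 1 := by
        rw [uni_mul]
        have : ((m : ℚ)) / N + ((-m : ℤ) : ℚ) / N = 0 := by push_cast; ring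
        rw [this, uni_zero]
      exact (eq_inv_of_mul_eq_one_right this).symm
  -- uni (1/3^N) is in the closure
  have hmem : uni (1 / 3 ^ N) ∈ Subgroup.closure (T : Set (PGL2 ℚ)) := by
    rw [hT]
    exact ⟨key N, ⟨1 / 3 ^ N, rfl⟩⟩
  obtain ⟨m, hm⟩ := main _ hmem
  have heq : (1 : ℚ) / 3 ^ N = m / N := uni_injective hm
  -- derive contradiction: N = m * 3^N with m ≥ 1, but N < 3^N
  have hNQ : ((N : ℚ)) ≠ 0 := by exact_mod_cast hNpos.ne'
  have h3N : (3 : ℚ) ^ N ≠ 0 := by positivity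
  have hcross : (N : ℚ) = m * 3 ^ N := by
    field_simp at heq
    linarith [heq]
  have hmpos : (0 : ℚ) < m := by
    by_contra hle
    push_neg at hle
    have : (N : ℚ) ≤ 0 := by
      rw [hcross]
      exact mul_nonpos_of_nonpos_of_nonneg hle (by positivity)
    have : (0 : ℚ) < N := by exact_mod_cast hNpos
    linarith
  have hm1 : (1 : ℚ) ≤ m := by
    have : (1 : ℤ) ≤ m := by exact_mod_cast hmpos
    exact_mod_cast this
  have hge : (3 : ℚ) ^ N ≤ (N : ℚ) := by
    calc (3 : ℚ) ^ N = 1 * 3 ^ N := (one_mul _).symm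
    _ ≤ m * 3 ^ N := by apply mul_le_mul_of_nonneg_right hm1 (by positivity)
    _ = N := hcross.symm
  have hlt : (N : ℚ) < 3 ^ N := by
    have : N < 3 ^ N := Nat.lt_pow_self (by norm_num : 1 < 3)
    exact_mod_cast this
  linarith
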